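/- With the correspondence of Lemma 8.3 (ψ non-increasing continuous on [x₀,∞), r the corresponding function on [t₀,∞) with ψ(e^{t−nr(t)}) = e^{−t−mr(t)}, λ(t) = t − nr(t) strictly increasing to ∞, L(t) = t + mr(t) non-decreasing), for any non-negative integer q: ∫_{x₀}^∞ (log x)^q ψ(x) dx < ∞ if and only if ∫_{t₀}^∞ t^q e^{−(m+n) r(t)} dt < ∞. -/

import Mathlib

open Filter Set MeasureTheory
open scoped ENNReal

lemma aux_pow_le_exp (q : ℕ) {x : ℝ} (hx : 0 ≤ x) : x ^ q ≤ (q : ℝ) ^ q * Real.exp x := by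
  rcases Nat.eq_zero_or_pos q with hq | hq
  · subst hq; simpa using Real.one_le_exp hx
  · have hq' : (0:ℝ) < q := by positivity
    have h1 : x / q ≤ Real.exp (x / q) := by
      have := Real.add_one_le_exp (x / q - 1)
      have h2 : Real.exp (x / q - 1) ≤ Real.exp (x / q) := by
        apply Real.exp_le_exp.2; linarith
      linarith
    have h2 : x ≤ (q : ℝ) * Real.exp (x / q) := by
      have := mul_le_mul_of_nonneg_left h1 (le_of_lt hq')
      rwa [mul_div_cancel₀ _ (ne_of_gt hq')] at this
    calc x ^ q ≤ ((q : ℝ) * Real.exp (x / q)) ^ q := pow_le_pow_left₀ hx h2 q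
    _ = (q : ℝ) ^ q * Real.exp (x / q) ^ q := mul_pow _ _ _
    _ = (q : ℝ) ^ q * Real.exp x := by
        rw [← Real.exp_nat_mul]
        congr 1
        field_simp
  
lemma aux_add_pow (q : ℕ) {a b : ℝ} (ha : 0 ≤ a) (hb : 0 ≤ b) :
    (a + b) ^ q ≤ 2 ^ q * (a ^ q + b ^ q) := by
  have h : a + b ≤ 2 * max a b := by
    rcases le_total a b with h | h
    · simp [max_eq_right h]; linarith
    · simp [max_eq_left h]; linarith
  calc (a + b) ^ q ≤ (2 * max a b) ^ q := pow_le_pow_left₀ (by linarith) h q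
  _ = 2 ^ q * max a b ^ q := mul_pow _ _ _
  _ ≤ 2 ^ q * (a ^ q + b ^ q) := by
      apply mul_le_mul_of_nonneg_left _ (by positivity)
      rcases le_total a b with h | h
      · rw [max_eq_right h]; nlinarith [pow_nonneg ha q]
      · rw [max_eq_left h]; nlinarith [pow_nonneg hb q]

lemma aux_iUnion_Ioc {u : ℕ → ℝ} (hu : ∀ j, u j < u (j+1)) (hto : Tendsto u atTop atTop) :
    Ioi (u 0) = ⋃ j, Ioc (u j) (u (j+1)) := by
  have hmono : StrictMono u := strictMono_nat_of_lt_succ hu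
  ext t
  simp only [mem_Ioi, mem_iUnion, mem_Ioc]
  constructor
  · intro ht
    have hex : ∃ j, t ≤ u j := by
      rcases (tendsto_atTop.1 hto t).exists with ⟨j, hj⟩
      exact ⟨j, hj⟩
    classical
    have h0 : ¬ t ≤ u 0 := not_le.2 ht
    let j₀ := Nat.find hex
    have hj₀ : t ≤ u j₀ := Nat.find_spec hex
    have hj₀ne : j₀ ≠ 0 := by
      intro h; exact h0 (h ▸ hj₀)
    obtain ⟨j, hj⟩ := Nat.exists_eq_succ_of_ne_zero hj₀ne
    refine ⟨j, ?_, ?_⟩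
    · have := Nat.find_min hex (m := j) (by omega)
      exact not_le.1 this
    · rw [← Nat.succ_eq_add_one, ← hj]; exact hj₀
  · rintro ⟨j, hj1, _⟩
    exact lt_of_le_of_lt (hmono.monotone (Nat.zero_le j)) hj1

lemma aux_pairwise_disjoint {u : ℕ → ℝ} (hu : ∀ j, u j < u (j+1)) :
    Pairwise (Function.onFun Disjoint fun j => Ioc (u j) (u (j+1))) := by
  have hmono : StrictMono u := strictMono_nat_of_lt_succ hu
  intro i j hij
  wlog h : i < j generalizing i j
  · exact (this hij.symm (by omega)).symm
  · apply Set.disjoint_left.2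
    rintro x ⟨_, hx2⟩ ⟨hx3, _⟩
    have : u (i+1) ≤ u j := hmono.monotone (by omega)
    linarith

lemma aux_lintegral_Ioi_eq_tsum {u : ℕ → ℝ} (hu : ∀ j, u j < u (j+1))
    (hto : Tendsto u atTop atTop) (f : ℝ → ℝ≥0∞) :
    ∫⁻ x in Ioi (u 0), f x = ∑' j, ∫⁻ x in Ioc (u j) (u (j+1)), f x := by
  rw [aux_iUnion_Ioc hu hto,
    MeasureTheory.Measure.restrict_iUnion (aux_pairwise_disjoint hu) (fun i => measurableSet_Ioc),
    lintegral_sum_measure]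

lemma aux_exp_decay_integral (a : ℝ) :
    ∫⁻ t in Ioi a, ENNReal.ofReal (Real.exp ((a - t)/2)) = ENNReal.ofReal 2 := by
  have hint : IntegrableOn (fun t => Real.exp ((a - t)/2)) (Ioi a) := by
    have h := (exp_neg_integrableOn_Ioi a (b := (1:ℝ)/2) (by norm_num)).const_mul (Real.exp (a/2))
    apply (integrableOn_congr_fun ?_ measurableSet_Ioi).2 h
    intro x _
    simp only [← Real.exp_add]
    ring_nf
  have hval : ∫ t in Ioi a, Real.exp ((a - t)/2) = 2 := by
    have := MeasureTheory.integral_Ioi_of_hasDerivAt_of_tendsto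
      (f := fun t => -2 * Real.exp ((a - t)/2)) (f' := fun t => Real.exp ((a - t)/2))
      (a := a) (m := 0) ?_ ?_ hint ?_
    · rw [this]; simp
    · exact (Continuous.continuousWithinAt (by continuity))
    · intro x _
      have h : HasDerivAt (fun t : ℝ => (a - t)/2) (-(1/2)) x := by
        have h0 : HasDerivAt (fun t : ℝ => (a - t)/2) (-1/2) x := ((hasDerivAt_id x).const_sub a).div_const 2
        convert h0 using 1
        norm_num
      have := ((h.exp).const_mul (-2 : ℝ))
      refine this.congr_deriv ?_
      ring
    · have h : Tendsto (fun t : ℝ => (a - t)/2) atTop atBot := by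
        apply Tendsto.atBot_div_const (by norm_num)
        exact tendsto_atBot_add_const_left _ a (tendsto_neg_atTop_atBot.comp tendsto_id) |>.congr (by intro x; simp; ring)
      have := (Real.tendsto_exp_atBot.comp h).const_mul (-2 : ℝ)
      simpa using this
  rw [← MeasureTheory.ofReal_integral_eq_lintegral_ofReal hint
    (Filter.Eventually.of_forall (fun x => (Real.exp_pos _).le)), hval]

set_option maxHeartbeats 8000000 in
theorem stmt_10 (m n : ℕ) (hm : 1 ≤ m) (hn : 1 ≤ n) (q : ℕ) (x₀ t₀ : ℝ)
    (ψ r : ℝ → ℝ)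
    (hcont : ContinuousOn ψ (Ici x₀)) (hanti : AntitoneOn ψ (Ici x₀))
    (hpos : ∀ x ∈ Ici x₀, 0 < ψ x)
    (hrcont : ContinuousOn r (Ici t₀))
    (hlam : StrictMonoOn (fun t => t - n * r t) (Ici t₀))
    (hlaminf : Tendsto (fun t => t - n * r t) atTop atTop)
    (hL : MonotoneOn (fun t => t + m * r t) (Ici t₀))
    (hx₀ : x₀ = Real.exp (t₀ - n * r t₀))
    (heq : ∀ t ∈ Ici t₀, ψ (Real.exp (t - n * r t)) = Real.exp (-t - m * r t)) :
    IntegrableOn (fun x => (Real.log x) ^ q * ψ x) (Ici x₀) ↔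
    IntegrableOn (fun t => t ^ q * Real.exp (-((m : ℝ) + n) * r t)) (Ici t₀) := by
  have hm0 : (0:ℝ) < m := by exact_mod_cast hm
  have hn0 : (0:ℝ) < n := by exact_mod_cast hn
  have hm1 : (1:ℝ) ≤ m := by exact_mod_cast hm
  have hn1 : (1:ℝ) ≤ n := by exact_mod_cast hn
  have hmn0 : (0:ℝ) < (m:ℝ) + n := by linarith
  have hx₀pos : 0 < x₀ := hx₀ ▸ Real.exp_pos _
  have he1 : (1:ℝ) < Real.exp 1 := by nlinarith [Real.add_one_le_exp 1]
  -- continuity facts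
  have hlamcont : ContinuousOn (fun t : ℝ => t - n * r t) (Ici t₀) :=
    continuousOn_id.sub (continuousOn_const.mul hrcont)
  have hf₁cont : ContinuousOn (fun x => (Real.log x) ^ q * ψ x) (Ici x₀) := by
    apply ContinuousOn.mul _ hcont
    apply ContinuousOn.pow
    apply Real.continuousOn_log.mono
    intro x hx
    simp only [mem_compl_iff, mem_singleton_iff]
    intro h; rw [h] at hx; exact absurd hx (not_le.2 hx₀pos) -- hx : x₀ ≤ 0
  have hf₂cont : ContinuousOn (fun t : ℝ => t ^ q * Real.exp (-((m : ℝ) + n) * r t)) (Ici t₀) := by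
    apply ContinuousOn.mul (continuousOn_id.pow q)
    exact Real.continuous_exp.comp_continuousOn (continuousOn_const.mul hrcont)
  -- surjectivity of lambda onto [lam t₀, ∞)
  have hsurj : ∀ y : ℝ, t₀ - n * r t₀ ≤ y → ∃ t, t₀ ≤ t ∧ t - n * r t = y := by
    intro y hy
    obtain ⟨b, hb⟩ := (tendsto_atTop.1 hlaminf y).exists_forall_of_atTop
    have h1 : y ≤ (max b t₀) - n * r (max b t₀) := hb (max b t₀) (le_max_left _ _)
    have h2 : t₀ ≤ max b t₀ := le_max_right _ _
    have h3 := intermediate_value_Icc h2 (hlamcont.mono Icc_subset_Ici_self)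
    obtain ⟨t, ht, hteq⟩ := h3 ⟨hy, h1⟩
    exact ⟨t, ht.1, hteq⟩
  -- choice of the base index K
  obtain ⟨K₀, hK₀⟩ := exists_nat_ge
    (max (t₀ - n * r t₀) ((2 * ((n:ℝ) * |t₀ + m * r t₀| + ((m:ℝ) + n))) / m))
  set K : ℕ := K₀ + 1 with hKdef
  have hKK₀ : (K₀:ℝ) ≤ (K:ℝ) := by rw [hKdef]; push_cast; linarith
  have hK1 : t₀ - n * r t₀ ≤ (K:ℝ) := le_trans (le_trans (le_max_left _ _) hK₀) hKK₀
  have hK2 : (1:ℝ) ≤ (K:ℝ) := by rw [hKdef]; push_cast; linarith [Nat.cast_nonneg (α := ℝ) K₀]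
  have hK3 : 2 * ((n:ℝ) * |t₀ + m * r t₀| + ((m:ℝ) + n)) ≤ (K:ℝ) * m := by
    have := le_trans (le_trans (le_max_right _ _) hK₀) hKK₀
    rw [div_le_iff₀ hm0] at this
    linarith
  -- the points t_j
  have hex : ∀ j : ℕ, ∃ t, t₀ ≤ t ∧ ((K:ℝ) ≤ (j:ℝ) → t - n * r t = (j:ℝ)) := by
    intro j
    by_cases h : (K:ℝ) ≤ (j:ℝ)
    · obtain ⟨t, ht1, ht2⟩ := hsurj j (hK1.trans h)
      exact ⟨t, ht1, fun _ => ht2⟩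
    · exact ⟨t₀, le_refl _, fun h' => absurd h' h⟩
  choose tt htt₀ httlam' using hex
  have httlam : ∀ j : ℕ, K ≤ j → tt j - n * r (tt j) = (j:ℝ) := by
    intro j hj
    exact httlam' j (by exact_mod_cast hj)
  -- monotone facts
  have hLmono : ∀ s t : ℝ, t₀ ≤ s → s ≤ t → s + m * r s ≤ t + m * r t := by
    intro s t hs hst
    exact hL (mem_Ici.2 hs) (mem_Ici.2 (hs.trans hst)) hst
  have hlmono : ∀ s t : ℝ, t₀ ≤ s → s ≤ t → s - n * r s ≤ t - n * r t := by
    intro s t hs hst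
    exact hlam.monotoneOn (mem_Ici.2 hs) (mem_Ici.2 (hs.trans hst)) hst
  -- lower bound for t_j
  have htlow : ∀ j : ℕ, K ≤ j → (m:ℝ) * j + 2 * ((m:ℝ)+n) ≤ 2 * ((m:ℝ)+n) * tt j := by
    intro j hj
    have e1 := httlam j hj
    have hval : ((m:ℝ) + n) * tt j = m * j + n * (tt j + m * r (tt j)) := by
      linear_combination (m:ℝ) * e1
    have hLlow : t₀ + m * r t₀ ≤ tt j + m * r (tt j) := hLmono t₀ (tt j) (le_refl _) (htt₀ j)
    have habs : -(|t₀ + m * r t₀|) ≤ t₀ + m * r t₀ := neg_abs_le _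
    have hKj : (K:ℝ) ≤ (j:ℝ) := by exact_mod_cast hj
    nlinarith [hK3, mul_le_mul_of_nonneg_right hKj (le_of_lt hm0)]
  have h1tt : ∀ j : ℕ, K ≤ j → 1 ≤ tt j := by
    intro j hj
    have := htlow j hj
    have hjpos : (0:ℝ) ≤ (j:ℝ) := Nat.cast_nonneg j
    nlinarith
  have httm : ∀ j : ℕ, K ≤ j → tt j < tt (j+1) := by
    intro j hj
    by_contra h
    push_neg at h
    have h2 := hlmono (tt (j+1)) (tt j) (htt₀ _) h
    rw [httlam j hj, httlam (j+1) (by omega)] at h2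
    push_cast at h2
    linarith
  -- growth of L within an interval
  have hLt : ∀ j : ℕ, K ≤ j → ∀ t, tt j < t → t ≤ tt (j+1) →
      tt j + m * r (tt j) + (t - tt j) - m ≤ t + m * r t := by
    intro j hj t ht1 ht2
    have hid : ∀ s : ℝ, ((m:ℝ) + n) * s = m * (s - n * r s) + n * (s + m * r s) := by
      intro s; ring
    have e1 := httlam j hj
    have e2 := httlam (j+1) (by omega)
    have hlt : t - n * r t ≤ tt (j+1) - n * r (tt (j+1)) :=
      hlmono t (tt (j+1)) ((htt₀ j).trans ht1.le) ht2
    rw [e2] at hlt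
    push_cast at hlt
    have h1 := hid t
    have h2 := hid (tt j)
    rw [e1] at h2
    nlinarith [ht1.le]
  -- the gap between consecutive points
  have hgap : ∀ j : ℕ, K ≤ j → (m:ℝ) / ((m:ℝ)+n) ≤ tt (j+1) - tt j := by
    intro j hj
    have e1 := httlam j hj
    have e2 := httlam (j+1) (by omega)
    have hLl : tt j + m * r (tt j) ≤ tt (j+1) + m * r (tt (j+1)) :=
      hLmono (tt j) (tt (j+1)) (htt₀ j) (httm j hj).le
    have hval1 : ((m:ℝ) + n) * tt j = m * j + n * (tt j + m * r (tt j)) := by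
      linear_combination (m:ℝ) * e1
    have hval2 : ((m:ℝ) + n) * tt (j+1) = m * (j+1) + n * (tt (j+1) + m * r (tt (j+1))) := by
      push_cast at e2 ⊢
      linear_combination (m:ℝ) * e2
    rw [div_le_iff₀ hmn0]
    nlinarith
  -- psi at exp j
  have hpsij : ∀ j : ℕ, K ≤ j → ψ (Real.exp (j:ℝ)) = Real.exp (-(tt j + m * r (tt j))) := by
    intro j hj
    have e1 := httlam j hj
    have h2 := heq (tt j) (mem_Ici.2 (htt₀ j))
    rw [e1] at h2
    rw [h2]
    congr 1
    ring
  have hexpj_mem : ∀ j : ℕ, (K:ℝ) ≤ (j:ℝ) → Real.exp (j:ℝ) ∈ Ici x₀ := by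
    intro j hj
    rw [mem_Ici, hx₀]
    exact Real.exp_le_exp.2 (hK1.trans hj)
  -- partition sequences
  set u : ℕ → ℝ := fun i => tt (K + i) with hudef
  set v : ℕ → ℝ := fun i => Real.exp ((K:ℝ) + i) with hvdef
  have hucast : ∀ i : ℕ, ((K + i : ℕ) : ℝ) = (K:ℝ) + i := by intro i; push_cast; ring
  have hu : ∀ i : ℕ, u i < u (i+1) := by
    intro i
    exact httm (K + i) (Nat.le_add_right K i)
  have hv : ∀ i : ℕ, v i < v (i+1) := by
    intro i
    apply Real.exp_lt_exp.2
    push_cast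
    linarith
  have huto : Tendsto u atTop atTop := by
    rw [tendsto_atTop_atTop]
    intro b
    obtain ⟨N, hN⟩ := exists_nat_ge (2 * ((m:ℝ)+n) * (|b|+1) / m)
    refine ⟨N, fun i hi => ?_⟩
    have h1 := htlow (K+i) (Nat.le_add_right K i)
    have h2 : (N:ℝ) ≤ (i:ℝ) := Nat.cast_le.2 hi
    have h3 : (i:ℝ) ≤ ((K+i:ℕ):ℝ) := by rw [hucast]; linarith [Nat.cast_nonneg (α := ℝ) K]
    have hN' : 2 * ((m:ℝ)+n) * (|b|+1) ≤ N * m := by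
      rw [div_le_iff₀ hm0] at hN; linarith
    have habs : b ≤ |b| := le_abs_self b
    have hb1 : ((m:ℝ)) * ((K+i:ℕ):ℝ) ≥ (m:ℝ) * N := by
      apply mul_le_mul_of_nonneg_left _ (le_of_lt hm0)
      linarith
    nlinarith
  have hvto : Tendsto v atTop atTop := by
    apply Real.tendsto_exp_atTop.comp
    exact tendsto_atTop_add_const_left _ _ tendsto_natCast_atTop_atTop
  -- the main quantities
  set F₁ : ℝ → ℝ≥0∞ := fun x => ENNReal.ofReal ((Real.log x) ^ q * ψ x) with hF₁def
  set F₂ : ℝ → ℝ≥0∞ := fun t => ENNReal.ofReal (t ^ q * Real.exp (-((m:ℝ) + n) * r t)) with hF₂def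
  set U : ℕ → ℝ≥0∞ := fun j => ENNReal.ofReal ((j:ℝ)^q * Real.exp ((j:ℝ) - (tt j + m * r (tt j)))) with hUdef
  set A : ℝ≥0∞ := ∫⁻ x in Ioi (v 0), F₁ x with hAdef
  set B : ℝ≥0∞ := ∫⁻ t in Ioi (u 0), F₂ t with hBdef
  set S : ℝ≥0∞ := ∑' i : ℕ, U (K + i) with hSdef
  have hA : A = ∑' i : ℕ, ∫⁻ x in Ioc (v i) (v (i+1)), F₁ x :=
    aux_lintegral_Ioi_eq_tsum hv hvto F₁
  have hB : B = ∑' i : ℕ, ∫⁻ t in Ioc (u i) (u (i+1)), F₂ t :=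
    aux_lintegral_Ioi_eq_tsum hu huto F₂
  -- basic facts about the index points
  have hjr1 : ∀ i : ℕ, (1:ℝ) ≤ ((K + i : ℕ) : ℝ) := by
    intro i
    rw [hucast]
    linarith [Nat.cast_nonneg (α := ℝ) i]
  have hvi : ∀ i : ℕ, v i = Real.exp (((K + i:ℕ)):ℝ) := by
    intro i; rw [hvdef]; simp only []; rw [hucast]
  have hvimem : ∀ i : ℕ, v i ∈ Ici x₀ := by
    intro i
    rw [hvi]
    exact hexpj_mem (K+i) (by rw [hucast]; linarith [Nat.cast_nonneg (α := ℝ) i])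
  -- Bound (1)
  have hbound1 : ∀ i : ℕ, ∫⁻ x in Ioc (v i) (v (i+1)), F₁ x ≤
      ENNReal.ofReal (2^q * Real.exp 1) * U (K + i) := by
    intro i
    have hj : K ≤ K + i := Nat.le_add_right K i
    set jr : ℝ := ((K + i:ℕ):ℝ) with hjrdef
    set Lj : ℝ := tt (K+i) + m * r (tt (K+i)) with hLjdef
    have hjr1' : (1:ℝ) ≤ jr := hjr1 i
    have hvsucc : v (i+1) = Real.exp (jr + 1) := by
      rw [hvi (i+1), hjrdef]; congr 1; push_cast; ring
    have hpt : ∀ x ∈ Ioc (v i) (v (i+1)), F₁ x ≤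
        ENNReal.ofReal ((jr+1)^q * Real.exp (-Lj)) := by
      intro x hx
      obtain ⟨hx1, hx2⟩ := hx
      have hxpos : 0 < x := lt_trans (Real.exp_pos _) hx1
      have hlogle : Real.log x ≤ jr + 1 := by
        rw [Real.log_le_iff_le_exp hxpos]
        rw [hvsucc] at hx2; exact hx2
      have hlogge : (0:ℝ) ≤ Real.log x := by
        apply Real.log_nonneg
        calc (1:ℝ) ≤ Real.exp jr := Real.one_le_exp (by linarith)
        _ = v i := (hvi i).symm
        _ ≤ x := hx1.le
      have hxmem : x ∈ Ici x₀ := mem_Ici.2 (le_trans (mem_Ici.1 (hvimem i)) hx1.le)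
      have hpsile : ψ x ≤ ψ (v i) := hanti (hvimem i) hxmem hx1.le
      have hpsiv : ψ (v i) = Real.exp (-Lj) := by
        rw [hvi i, hpsij (K+i) hj, hLjdef]
      rw [hF₁def]
      apply ENNReal.ofReal_le_ofReal
      have h1 : (Real.log x)^q ≤ (jr+1)^q := pow_le_pow_left₀ hlogge hlogle q
      have h2 : ψ x ≤ Real.exp (-Lj) := hpsiv ▸ hpsile
      exact mul_le_mul h1 h2 (le_of_lt (hpos x hxmem)) (by positivity)
    calc ∫⁻ x in Ioc (v i) (v (i+1)), F₁ x
        ≤ ∫⁻ _x in Ioc (v i) (v (i+1)), ENNReal.ofReal ((jr+1)^q * Real.exp (-Lj)) :=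
          setLIntegral_mono' measurableSet_Ioc hpt
      _ = ENNReal.ofReal ((jr+1)^q * Real.exp (-Lj)) * volume (Ioc (v i) (v (i+1))) :=
          setLIntegral_const _ _
      _ = ENNReal.ofReal ((jr+1)^q * Real.exp (-Lj)) * ENNReal.ofReal (v (i+1) - v i) := by
          rw [Real.volume_Ioc]
      _ = ENNReal.ofReal ((jr+1)^q * Real.exp (-Lj) * (v (i+1) - v i)) :=
          (ENNReal.ofReal_mul (mul_nonneg (pow_nonneg (by linarith) q) (Real.exp_pos _).le)).symm
      _ ≤ ENNReal.ofReal (2^q * Real.exp 1) * U (K+i) := by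
          rw [hUdef]
          simp only []
          rw [← ENNReal.ofReal_mul (by positivity)]
          apply ENNReal.ofReal_le_ofReal
          rw [hvsucc, hvi i]
          have e1 : Real.exp (jr+1) = Real.exp jr * Real.exp 1 := by
            rw [← Real.exp_add]
          have e2 : Real.exp (jr - Lj) = Real.exp jr * Real.exp (-Lj) := by
            rw [← Real.exp_add]; congr 1 <;> ring
          have h1 : (jr+1)^q ≤ 2^q * jr^q := by
            calc (jr+1)^q ≤ (2*jr)^q := pow_le_pow_left₀ (by linarith) (by linarith) q
            _ = 2^q * jr^q := mul_pow _ _ _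
          have h2 : Real.exp (jr+1) - Real.exp jr ≤ Real.exp 1 * Real.exp jr := by
            rw [e1]; nlinarith [Real.exp_pos jr]
          have h3 : (0:ℝ) ≤ Real.exp (jr+1) - Real.exp jr := by
            have : Real.exp jr ≤ Real.exp (jr+1) := Real.exp_le_exp.2 (by linarith)
            linarith
          calc (jr+1)^q * Real.exp (-Lj) * (Real.exp (jr+1) - Real.exp jr)
              ≤ (2^q * jr^q) * Real.exp (-Lj) * (Real.exp 1 * Real.exp jr) := by
                apply mul_le_mul _ h2 h3 (by positivity)
                exact mul_le_mul_of_nonneg_right h1 (Real.exp_pos _).le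
            _ = 2^q * Real.exp 1 * (jr^q * Real.exp (jr - Lj)) := by rw [e2]; ring
  -- Bound (2)
  have hbound2 : ∀ i : ℕ, U (K + i + 1) ≤
      ENNReal.ofReal (2^q * Real.exp 1 * Real.exp 1 / (Real.exp 1 - 1)) *
        ∫⁻ x in Ioc (v i) (v (i+1)), F₁ x := by
    intro i
    have hj : K ≤ K + i := Nat.le_add_right K i
    set jr : ℝ := ((K + i:ℕ):ℝ) with hjrdef
    set L' : ℝ := tt (K+i+1) + m * r (tt (K+i+1)) with hL'def
    have hjr1' : (1:ℝ) ≤ jr := hjr1 i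
    have hvsucc : v (i+1) = Real.exp (jr + 1) := by
      rw [hvi (i+1), hjrdef]; congr 1; push_cast; ring
    have hcast2 : ((K + i + 1 : ℕ):ℝ) = jr + 1 := by rw [hjrdef]; push_cast; ring
    have hpt : ∀ x ∈ Ioc (v i) (v (i+1)),
        ENNReal.ofReal (jr^q * Real.exp (-L')) ≤ F₁ x := by
      intro x hx
      obtain ⟨hx1, hx2⟩ := hx
      have hxpos : 0 < x := lt_trans (Real.exp_pos _) hx1
      have hlogge : jr ≤ Real.log x := by
        rw [Real.le_log_iff_exp_le hxpos]
        rw [hvi i] at hx1; exact hx1.le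
      have hxmem : x ∈ Ici x₀ := mem_Ici.2 (le_trans (mem_Ici.1 (hvimem i)) hx1.le)
      have hpsige : ψ (v (i+1)) ≤ ψ x := hanti hxmem (hvimem (i+1)) hx2
      have hpsiv : ψ (v (i+1)) = Real.exp (-L') := by
        rw [hvi (i+1), show K + (i+1) = K + i + 1 from rfl,
          hpsij (K+i+1) (by omega), hL'def]
      rw [hF₁def]
      apply ENNReal.ofReal_le_ofReal
      have h1 : jr^q ≤ (Real.log x)^q := pow_le_pow_left₀ (by linarith) hlogge q
      have h2 : Real.exp (-L') ≤ ψ x := hpsiv ▸ hpsige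
      exact mul_le_mul h1 h2 (Real.exp_pos _).le (pow_nonneg (by linarith) q)
    have hlow : ENNReal.ofReal (jr^q * Real.exp (-L') * (Real.exp (jr+1) - Real.exp jr)) ≤
        ∫⁻ x in Ioc (v i) (v (i+1)), F₁ x := by
      calc ENNReal.ofReal (jr^q * Real.exp (-L') * (Real.exp (jr+1) - Real.exp jr))
          = ENNReal.ofReal (jr^q * Real.exp (-L')) * ENNReal.ofReal (v (i+1) - v i) := by
            rw [← ENNReal.ofReal_mul (mul_nonneg (pow_nonneg (by linarith) q) (Real.exp_pos _).le)]
            rw [hvsucc, hvi i]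
        _ = ENNReal.ofReal (jr^q * Real.exp (-L')) * volume (Ioc (v i) (v (i+1))) := by
            rw [Real.volume_Ioc]
        _ = ∫⁻ _x in Ioc (v i) (v (i+1)), ENNReal.ofReal (jr^q * Real.exp (-L')) :=
            (setLIntegral_const _ _).symm
        _ ≤ ∫⁻ x in Ioc (v i) (v (i+1)), F₁ x := setLIntegral_mono' measurableSet_Ioc hpt
    calc U (K + i + 1)
        = ENNReal.ofReal ((jr+1)^q * Real.exp ((jr+1) - L')) := by
          rw [hUdef]; simp only []; rw [hcast2]
      _ ≤ ENNReal.ofReal (2^q * Real.exp 1 * Real.exp 1 / (Real.exp 1 - 1)) *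
          ENNReal.ofReal (jr^q * Real.exp (-L') * (Real.exp (jr+1) - Real.exp jr)) := by
          rw [← ENNReal.ofReal_mul (div_nonneg (by positivity) (by linarith))]
          apply ENNReal.ofReal_le_ofReal
          have e1 : Real.exp (jr+1) = Real.exp jr * Real.exp 1 := by rw [← Real.exp_add]
          have e2 : Real.exp ((jr+1) - L') = Real.exp jr * Real.exp 1 * Real.exp (-L') := by
            rw [← Real.exp_add, ← Real.exp_add]; congr 1 <;> ring
          have h1 : (jr+1)^q ≤ 2^q * jr^q := by
            calc (jr+1)^q ≤ (2*jr)^q := pow_le_pow_left₀ (by linarith) (by linarith) q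
            _ = 2^q * jr^q := mul_pow _ _ _
          have he1 : (1:ℝ) < Real.exp 1 := by
            have := Real.add_one_le_exp 1; linarith
          rw [e2, e1]
          rw [div_mul_eq_mul_div, le_div_iff₀ (by linarith)]
          have hpos1 : (0:ℝ) ≤ jr^q := pow_nonneg (by linarith) q
          have h1X := mul_le_mul_of_nonneg_right h1
            (mul_nonneg (by positivity) (by linarith) :
              (0:ℝ) ≤ Real.exp jr * Real.exp 1 * Real.exp (-L') * (Real.exp 1 - 1))
          have hextra : (0:ℝ) ≤ 2^q * jr^q * (Real.exp jr * Real.exp (-L')) *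
              (Real.exp 1 * ((Real.exp 1 - 1) * (Real.exp 1 - 1))) :=
            mul_nonneg (mul_nonneg (by positivity) (by positivity))
              (mul_nonneg (Real.exp_pos 1).le
                (mul_nonneg (by linarith) (by linarith)))
          nlinarith [h1X, hextra]
      _ ≤ _ := by
          apply mul_le_mul_of_nonneg_left hlow (by positivity)
  have huval : ∀ i : ℕ, u i = tt (K+i) := by intro i; rw [hudef]
  have huval1 : ∀ i : ℕ, u (i+1) = tt (K+i+1) := by
    intro i; rw [huval (i+1), ← Nat.add_assoc]
  -- Bound (3)
  have hbound3 : ∀ i : ℕ, U (K + i + 1) ≤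
      ENNReal.ofReal (2^q * Real.exp 1 * (2*((m:ℝ)+n)/m)^q * (((m:ℝ)+n)/m)) *
        ∫⁻ t in Ioc (u i) (u (i+1)), F₂ t := by
    intro i
    have hj : K ≤ K + i := Nat.le_add_right K i
    set jr : ℝ := ((K + i:ℕ):ℝ) with hjrdef
    set L' : ℝ := tt (K+i+1) + m * r (tt (K+i+1)) with hL'def
    have hjr1' : (1:ℝ) ≤ jr := hjr1 i
    have hcast2 : ((K + i + 1 : ℕ):ℝ) = jr + 1 := by rw [hjrdef]; push_cast; ring
    have hb1 : (1:ℝ) ≤ tt (K+i) := h1tt _ hj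
    have hpt : ∀ t ∈ Ioc (u i) (u (i+1)),
        ENNReal.ofReal ((tt (K+i))^q * Real.exp (jr - L')) ≤ F₂ t := by
      intro t ht
      obtain ⟨ht1, ht2⟩ := ht
      rw [huval i] at ht1
      rw [huval1 i] at ht2
      have htt0 : t₀ ≤ t := le_trans (htt₀ (K+i)) ht1.le
      have h1q : (tt (K+i))^q ≤ t^q := pow_le_pow_left₀ (by linarith) ht1.le q
      have hlamt : jr ≤ t - n * r t := by
        have h := hlmono (tt (K+i)) t (htt₀ _) ht1.le
        rw [httlam (K+i) hj] at h
        rw [hjrdef]; exact h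
      have hLt' : t + m * r t ≤ L' := by
        rw [hL'def]
        exact hLmono t (tt (K+i+1)) htt0 ht2
      rw [hF₂def]
      apply ENNReal.ofReal_le_ofReal
      have hexp : Real.exp (jr - L') ≤ Real.exp (-((m:ℝ)+n) * r t) := by
        apply Real.exp_le_exp.2
        have hrw : -((m:ℝ)+n) * r t = (t - n*r t) - (t + m*r t) := by push_cast; ring
        rw [hrw]; linarith
      exact mul_le_mul h1q hexp (Real.exp_pos _).le (pow_nonneg (by linarith) q)
    have hδ : (m:ℝ)/((m:ℝ)+n) ≤ u (i+1) - u i := by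
      rw [huval i, huval1 i]
      exact hgap (K+i) hj
    have hc0 : (0:ℝ) ≤ (tt (K+i))^q * Real.exp (jr - L') :=
      mul_nonneg (pow_nonneg (by linarith) q) (Real.exp_pos _).le
    have hlow : ENNReal.ofReal ((tt (K+i))^q * Real.exp (jr - L') * ((m:ℝ)/((m:ℝ)+n))) ≤
        ∫⁻ t in Ioc (u i) (u (i+1)), F₂ t := by
      calc ENNReal.ofReal ((tt (K+i))^q * Real.exp (jr - L') * ((m:ℝ)/((m:ℝ)+n)))
          ≤ ENNReal.ofReal ((tt (K+i))^q * Real.exp (jr - L') * (u (i+1) - u i)) := by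
            apply ENNReal.ofReal_le_ofReal
            exact mul_le_mul_of_nonneg_left hδ hc0
        _ = ENNReal.ofReal ((tt (K+i))^q * Real.exp (jr - L')) * ENNReal.ofReal (u (i+1) - u i) :=
            ENNReal.ofReal_mul hc0
        _ = ENNReal.ofReal ((tt (K+i))^q * Real.exp (jr - L')) * volume (Ioc (u i) (u (i+1))) := by
            rw [Real.volume_Ioc]
        _ = ∫⁻ _t in Ioc (u i) (u (i+1)), ENNReal.ofReal ((tt (K+i))^q * Real.exp (jr - L')) :=
            (setLIntegral_const _ _).symm
        _ ≤ ∫⁻ t in Ioc (u i) (u (i+1)), F₂ t := setLIntegral_mono' measurableSet_Ioc hpt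
    calc U (K + i + 1)
        = ENNReal.ofReal ((jr+1)^q * Real.exp ((jr+1) - L')) := by
          rw [hUdef]; simp only []; rw [hcast2]
      _ ≤ ENNReal.ofReal (2^q * Real.exp 1 * (2*((m:ℝ)+n)/m)^q * (((m:ℝ)+n)/m)) *
          ENNReal.ofReal ((tt (K+i))^q * Real.exp (jr - L') * ((m:ℝ)/((m:ℝ)+n))) := by
          rw [← ENNReal.ofReal_mul (by positivity)]
          apply ENNReal.ofReal_le_ofReal
          have ha2 : jr ≤ (2*((m:ℝ)+n)/m) * tt (K+i) := by
            rw [div_mul_eq_mul_div, le_div_iff₀ hm0]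
            have h := htlow (K+i) hj
            rw [← hjrdef] at h
            nlinarith
          have ha' : jr^q ≤ (2*((m:ℝ)+n)/m)^q * (tt (K+i))^q := by
            rw [← mul_pow]
            exact pow_le_pow_left₀ (by linarith) ha2 q
          have h1 : (jr+1)^q ≤ 2^q * jr^q := by
            calc (jr+1)^q ≤ (2*jr)^q := pow_le_pow_left₀ (by linarith) (by linarith) q
            _ = 2^q * jr^q := mul_pow _ _ _
          have e2 : Real.exp ((jr+1) - L') = Real.exp 1 * Real.exp (jr - L') := by
            rw [← Real.exp_add]; congr 1 <;> ring
          calc (jr+1)^q * Real.exp ((jr+1) - L')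
              = (jr+1)^q * (Real.exp 1 * Real.exp (jr - L')) := by rw [e2]
            _ ≤ (2^q * jr^q) * (Real.exp 1 * Real.exp (jr - L')) :=
                mul_le_mul_of_nonneg_right h1 (by positivity)
            _ ≤ (2^q * ((2*((m:ℝ)+n)/m)^q * (tt (K+i))^q)) * (Real.exp 1 * Real.exp (jr - L')) := by
                apply mul_le_mul_of_nonneg_right
                  (mul_le_mul_of_nonneg_left ha' (by positivity)) (by positivity)
            _ = (2^q * Real.exp 1 * (2*((m:ℝ)+n)/m)^q * (((m:ℝ)+n)/m)) *
                ((tt (K+i))^q * Real.exp (jr - L') * ((m:ℝ)/((m:ℝ)+n))) := by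
                field_simp
      _ ≤ _ := by
          apply mul_le_mul_of_nonneg_left hlow (by positivity)
  -- Bound (4)
  have hbound4 : ∀ i : ℕ, (∫⁻ t in Ioc (u i) (u (i+1)), F₂ t) ≤
      ENNReal.ofReal (2 * 2^q * 2^q * Real.exp (1+(m:ℝ)) * (1 + 2^q + (q:ℝ)^q + (4*(q:ℝ))^q)) *
        (U (K+i) + ENNReal.ofReal (Real.exp (-((K+i:ℕ):ℝ)/2))) := by
    intro i
    have hj : K ≤ K + i := Nat.le_add_right K i
    set jr : ℝ := ((K + i:ℕ):ℝ) with hjrdef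
    set Lj : ℝ := tt (K+i) + m * r (tt (K+i)) with hLjdef
    have hjr1' : (1:ℝ) ≤ jr := hjr1 i
    have hb1 : (1:ℝ) ≤ tt (K+i) := h1tt _ hj
    have hCj0 : (0:ℝ) ≤ 2^q * Real.exp (jr + 1 + m) * Real.exp (-Lj) *
        ((tt (K+i))^q + 2^q * (q:ℝ)^q) := by
      apply mul_nonneg (by positivity)
      exact add_nonneg (pow_nonneg (by linarith) q) (by positivity)
    have hpt : ∀ t ∈ Ioc (u i) (u (i+1)), F₂ t ≤
        ENNReal.ofReal ((2^q * Real.exp (jr + 1 + m) * Real.exp (-Lj) *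
          ((tt (K+i))^q + 2^q * (q:ℝ)^q)) * Real.exp ((tt (K+i) - t)/2)) := by
      intro t ht
      obtain ⟨ht1, ht2⟩ := ht
      rw [huval i] at ht1
      rw [huval1 i] at ht2
      have htt0 : t₀ ≤ t := le_trans (htt₀ (K+i)) ht1.le
      have hs0 : (0:ℝ) ≤ t - tt (K+i) := by linarith
      -- exponential factor bound
      have hlamle : t - n * r t ≤ jr + 1 := by
        have h := hlmono t (tt (K+i+1)) htt0 ht2
        rw [httlam (K+i+1) (by omega)] at h
        rw [hjrdef]
        push_cast at h ⊢
        linarith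
      have hLge : Lj + (t - tt (K+i)) - m ≤ t + m * r t := by
        rw [hLjdef]
        exact hLt (K+i) hj t ht1 ht2
      have hE : Real.exp (-((m:ℝ)+n) * r t) ≤
          Real.exp ((jr + 1 + m) + (-Lj) + (-(t - tt (K+i)))) := by
        apply Real.exp_le_exp.2
        have hrw : -((m:ℝ)+n) * r t = (t - n*r t) - (t + m*r t) := by push_cast; ring
        rw [hrw]; linarith
      -- polynomial factor bound
      have h4 : t ^ q ≤ 2^q * ((tt (K+i))^q + 2^q * (q:ℝ)^q) * Real.exp ((t - tt (K+i))/2) := by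
        have hb2 := aux_pow_le_exp q (x := (t - tt (K+i))/2) (by linarith)
        have hexp1 : (1:ℝ) ≤ Real.exp ((t - tt (K+i))/2) := Real.one_le_exp (by linarith)
        have hsq : (t - tt (K+i))^q ≤ 2^q * (q:ℝ)^q * Real.exp ((t - tt (K+i))/2) := by
          have hrw : (t - tt (K+i))^q = 2^q * ((t - tt (K+i))/2)^q := by
            rw [← mul_pow]; congr 1; ring
          rw [hrw]
          calc 2^q * ((t - tt (K+i))/2)^q
              ≤ 2^q * ((q:ℝ)^q * Real.exp ((t - tt (K+i))/2)) :=
                mul_le_mul_of_nonneg_left hb2 (by positivity)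
            _ = 2^q * (q:ℝ)^q * Real.exp ((t - tt (K+i))/2) := by ring
        have hb3 := aux_add_pow q (a := tt (K+i)) (b := t - tt (K+i)) (by linarith) hs0
        have htq0 : (0:ℝ) ≤ (tt (K+i))^q := pow_nonneg (by linarith) q
        calc t^q = (tt (K+i) + (t - tt (K+i)))^q := by congr 1; ring
          _ ≤ 2^q * ((tt (K+i))^q + (t - tt (K+i))^q) := hb3
          _ ≤ 2^q * ((tt (K+i))^q + 2^q * (q:ℝ)^q) * Real.exp ((t - tt (K+i))/2) := by
              have hh1 : 2^q * (t - tt (K+i))^q ≤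
                  2^q * (2^q * (q:ℝ)^q * Real.exp ((t - tt (K+i))/2)) :=
                mul_le_mul_of_nonneg_left hsq (by positivity)
              have hh2 : (0:ℝ) ≤ 2^q * (tt (K+i))^q * (Real.exp ((t - tt (K+i))/2) - 1) := by
                apply mul_nonneg (mul_nonneg (by positivity) htq0)
                linarith
              nlinarith [hh1, hh2]
      rw [hF₂def]
      apply ENNReal.ofReal_le_ofReal
      have hmain := mul_le_mul h4 hE (Real.exp_pos _).le
        (by positivity :
          (0:ℝ) ≤ 2^q * ((tt (K+i))^q + 2^q * (q:ℝ)^q) * Real.exp ((t - tt (K+i))/2))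
      have e3 : Real.exp ((t - tt (K+i))/2) *
          Real.exp ((jr + 1 + m) + (-Lj) + (-(t - tt (K+i)))) =
          Real.exp (jr + 1 + m) * Real.exp (-Lj) * Real.exp ((tt (K+i) - t)/2) := by
        rw [← Real.exp_add, ← Real.exp_add, ← Real.exp_add]; congr 1 <;> ring
      calc t^q * Real.exp (-((m:ℝ)+n) * r t)
          ≤ (2^q * ((tt (K+i))^q + 2^q * (q:ℝ)^q) * Real.exp ((t - tt (K+i))/2)) *
            Real.exp ((jr + 1 + m) + (-Lj) + (-(t - tt (K+i)))) := hmain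
        _ = 2^q * ((tt (K+i))^q + 2^q * (q:ℝ)^q) *
            (Real.exp ((t - tt (K+i))/2) *
              Real.exp ((jr + 1 + m) + (-Lj) + (-(t - tt (K+i))))) := by ring
        _ = 2^q * Real.exp (jr + 1 + m) * Real.exp (-Lj) *
            ((tt (K+i))^q + 2^q * (q:ℝ)^q) * Real.exp ((tt (K+i) - t)/2) := by
            rw [e3]; ring
    calc (∫⁻ t in Ioc (u i) (u (i+1)), F₂ t)
        ≤ ∫⁻ t in Ioc (u i) (u (i+1)), ENNReal.ofReal
            ((2^q * Real.exp (jr + 1 + m) * Real.exp (-Lj) *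
              ((tt (K+i))^q + 2^q * (q:ℝ)^q)) * Real.exp ((tt (K+i) - t)/2)) :=
          setLIntegral_mono' measurableSet_Ioc hpt
      _ = ∫⁻ t in Ioc (u i) (u (i+1)),
            ENNReal.ofReal (2^q * Real.exp (jr + 1 + m) * Real.exp (-Lj) *
              ((tt (K+i))^q + 2^q * (q:ℝ)^q)) *
            ENNReal.ofReal (Real.exp ((tt (K+i) - t)/2)) := by
          simp only [ENNReal.ofReal_mul hCj0]
      _ = ENNReal.ofReal (2^q * Real.exp (jr + 1 + m) * Real.exp (-Lj) *
            ((tt (K+i))^q + 2^q * (q:ℝ)^q)) *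
          ∫⁻ t in Ioc (u i) (u (i+1)), ENNReal.ofReal (Real.exp ((tt (K+i) - t)/2)) :=
          lintegral_const_mul' _ _ ENNReal.ofReal_ne_top
      _ ≤ ENNReal.ofReal (2^q * Real.exp (jr + 1 + m) * Real.exp (-Lj) *
            ((tt (K+i))^q + 2^q * (q:ℝ)^q)) *
          ∫⁻ t in Ioi (tt (K+i)), ENNReal.ofReal (Real.exp ((tt (K+i) - t)/2)) := by
          apply mul_le_mul_right
          apply lintegral_mono_set
          rw [huval i]
          exact Ioc_subset_Ioi_self
      _ = ENNReal.ofReal (2^q * Real.exp (jr + 1 + m) * Real.exp (-Lj) *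
            ((tt (K+i))^q + 2^q * (q:ℝ)^q)) * ENNReal.ofReal 2 := by
          rw [aux_exp_decay_integral]
      _ ≤ ENNReal.ofReal (2 * 2^q * 2^q * Real.exp (1+(m:ℝ)) * (1 + 2^q + (q:ℝ)^q + (4*(q:ℝ))^q)) *
          (U (K+i) + ENNReal.ofReal (Real.exp (-jr/2))) := by
          rw [← ENNReal.ofReal_mul hCj0]
          have hU : U (K+i) = ENNReal.ofReal (jr^q * Real.exp (jr - Lj)) := by
            simp only [hUdef, hjrdef, hLjdef]
          rw [hU, ← ENNReal.ofReal_add (by positivity) (Real.exp_pos _).le,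
            ← ENNReal.ofReal_mul (by positivity)]
          apply ENNReal.ofReal_le_ofReal
          -- the key real inequality
          have hjr0 : (0:ℝ) ≤ jr := by linarith
          have hP0 : (0:ℝ) < Real.exp (jr - Lj) := Real.exp_pos _
          have hPdec : Real.exp (jr + 1 + m) * Real.exp (-Lj) =
              Real.exp (1 + (m:ℝ)) * Real.exp (jr - Lj) := by
            rw [← Real.exp_add, ← Real.exp_add]; congr 1 <;> ring
          set M := max Lj 0 with hMdef
          have hM0 : (0:ℝ) ≤ M := le_max_right _ _
          have hMq : M^q * Real.exp (jr - Lj) ≤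
              2^q * (jr^q * Real.exp (jr - Lj)) + (4*(q:ℝ))^q * Real.exp (-jr/2) := by
            rcases le_or_gt Lj (2*jr) with hcase | hcase
            · have hMle : M ≤ 2*jr := max_le hcase (by linarith)
              have hMq2 : M^q ≤ 2^q * jr^q := by
                calc M^q ≤ (2*jr)^q := pow_le_pow_left₀ hM0 hMle q
                _ = 2^q * jr^q := mul_pow _ _ _
              have h5 := mul_le_mul_of_nonneg_right hMq2 hP0.le
              have hE2 : (0:ℝ) ≤ (4*(q:ℝ))^q * Real.exp (-jr/2) := by positivity
              nlinarith
            · have hMeq : M = Lj := max_eq_left (by linarith)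
              have h4 : Lj^q ≤ (4*(q:ℝ))^q * Real.exp (Lj/4) := by
                have hb := aux_pow_le_exp q (x := Lj/4) (by linarith)
                calc Lj^q = 4^q * (Lj/4)^q := by rw [← mul_pow]; congr 1; ring
                _ ≤ 4^q * ((q:ℝ)^q * Real.exp (Lj/4)) :=
                    mul_le_mul_of_nonneg_left hb (by positivity)
                _ = (4*(q:ℝ))^q * Real.exp (Lj/4) := by rw [mul_pow]; ring
              have hexpc : Real.exp (Lj/4) * Real.exp (jr - Lj) ≤ Real.exp (-jr/2) := by
                rw [← Real.exp_add]
                apply Real.exp_le_exp.2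
                linarith
              have hnn : (0:ℝ) ≤ 2^q * (jr^q * Real.exp (jr - Lj)) := by positivity
              calc M^q * Real.exp (jr - Lj) = Lj^q * Real.exp (jr - Lj) := by rw [hMeq]
                _ ≤ ((4*(q:ℝ))^q * Real.exp (Lj/4)) * Real.exp (jr - Lj) :=
                    mul_le_mul_of_nonneg_right h4 hP0.le
                _ = (4*(q:ℝ))^q * (Real.exp (Lj/4) * Real.exp (jr - Lj)) := by ring
                _ ≤ (4*(q:ℝ))^q * Real.exp (-jr/2) :=
                    mul_le_mul_of_nonneg_left hexpc (by positivity)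
                _ ≤ 2^q * (jr^q * Real.exp (jr - Lj)) + (4*(q:ℝ))^q * Real.exp (-jr/2) :=
                    le_add_of_nonneg_left hnn
          have hval : ((m:ℝ)+n) * tt (K+i) = m * jr + n * Lj := by
            have e1 := httlam (K+i) hj
            rw [hjrdef, hLjdef]
            linear_combination (m:ℝ) * e1
          have htb : tt (K+i) ≤ jr + M := by
            have hLM : Lj ≤ M := le_max_left _ _
            nlinarith
          have htbq : (tt (K+i))^q ≤ 2^q * (jr^q + M^q) := by
            calc (tt (K+i))^q ≤ (jr + M)^q := pow_le_pow_left₀ (by linarith) htb q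
            _ ≤ 2^q * (jr^q + M^q) := aux_add_pow q hjr0 hM0
          have hjq1 : (1:ℝ) ≤ jr^q := by
            calc (1:ℝ) = 1^q := (one_pow q).symm
            _ ≤ jr^q := pow_le_pow_left₀ zero_le_one hjr1' q
          have g1 : (tt (K+i))^q * Real.exp (jr - Lj) ≤
              2^q * (jr^q * Real.exp (jr - Lj)) + 2^q * (M^q * Real.exp (jr - Lj)) := by
            nlinarith [mul_le_mul_of_nonneg_right htbq hP0.le]
          have g3 : (q:ℝ)^q * Real.exp (jr - Lj) ≤ (q:ℝ)^q * (jr^q * Real.exp (jr - Lj)) := by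
            apply mul_le_mul_of_nonneg_left _ (pow_nonneg (Nat.cast_nonneg q) q)
            nlinarith
          have hEp : (0:ℝ) < Real.exp (1+(m:ℝ)) := Real.exp_pos _
          have lhs_eq : 2 ^ q * Real.exp (jr + 1 + (m:ℝ)) * Real.exp (-Lj) *
              ((tt (K + i)) ^ q + 2 ^ q * (q:ℝ) ^ q) * 2 =
              2 * 2^q * Real.exp (1+(m:ℝ)) * ((tt (K+i))^q * Real.exp (jr - Lj)) +
              2 * 2^q * 2^q * Real.exp (1+(m:ℝ)) * ((q:ℝ)^q * Real.exp (jr - Lj)) := by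
            linear_combination ((tt (K+i))^q + 2^q * (q:ℝ)^q) * 2 * 2^q * hPdec
          rw [lhs_eq]
          have m1 := mul_le_mul_of_nonneg_left g1
            (by positivity : (0:ℝ) ≤ 2 * 2^q * Real.exp (1+(m:ℝ)))
          have m2 := mul_le_mul_of_nonneg_left hMq
            (by positivity : (0:ℝ) ≤ 2 * 2^q * 2^q * Real.exp (1+(m:ℝ)))
          have m3 := mul_le_mul_of_nonneg_left g3
            (by positivity : (0:ℝ) ≤ 2 * 2^q * 2^q * Real.exp (1+(m:ℝ)))
          have n1 : (0:ℝ) ≤ 2 * 2^q * 2^q * Real.exp (1+(m:ℝ)) *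
              ((4*(q:ℝ))^q * (jr^q * Real.exp (jr - Lj))) := by positivity
          have n2 : (0:ℝ) ≤ 2 * 2^q * 2^q * Real.exp (1+(m:ℝ)) *
              ((1 + 2^q + (q:ℝ)^q) * Real.exp (-jr/2)) := by positivity
          nlinarith [m1, m2, m3, n1, n2]
  -- summing up
  have hAsum : A ≤ ENNReal.ofReal (2^q * Real.exp 1) * S := by
    rw [hA, hSdef]
    calc ∑' i : ℕ, ∫⁻ x in Ioc (v i) (v (i+1)), F₁ x
        ≤ ∑' i : ℕ, ENNReal.ofReal (2^q * Real.exp 1) * U (K+i) :=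
          ENNReal.tsum_le_tsum hbound1
      _ = ENNReal.ofReal (2^q * Real.exp 1) * ∑' i : ℕ, U (K+i) := ENNReal.tsum_mul_left
  have hSsplit : S = U K + ∑' i : ℕ, U (K + i + 1) := by
    rw [hSdef]
    exact tsum_eq_zero_add' ENNReal.summable
  have hSA : S ≤ U K + ENNReal.ofReal (2^q * Real.exp 1 * Real.exp 1 / (Real.exp 1 - 1)) * A := by
    rw [hSsplit, hA]
    apply add_le_add_right
    calc ∑' i : ℕ, U (K + i + 1)
        ≤ ∑' i : ℕ, ENNReal.ofReal (2^q * Real.exp 1 * Real.exp 1 / (Real.exp 1 - 1)) *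
            ∫⁻ x in Ioc (v i) (v (i+1)), F₁ x := ENNReal.tsum_le_tsum hbound2
      _ = _ := ENNReal.tsum_mul_left
  have hSB : S ≤ U K + ENNReal.ofReal (2^q * Real.exp 1 * (2*((m:ℝ)+n)/m)^q * (((m:ℝ)+n)/m)) * B := by
    rw [hSsplit, hB]
    apply add_le_add_right
    calc ∑' i : ℕ, U (K + i + 1)
        ≤ ∑' i : ℕ, ENNReal.ofReal (2^q * Real.exp 1 * (2*((m:ℝ)+n)/m)^q * (((m:ℝ)+n)/m)) *
            ∫⁻ t in Ioc (u i) (u (i+1)), F₂ t := ENNReal.tsum_le_tsum hbound3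
      _ = _ := ENNReal.tsum_mul_left
  have hG : ∑' i : ℕ, ENNReal.ofReal (Real.exp (-((K+i:ℕ):ℝ)/2)) < ⊤ := by
    have hle : ∀ i : ℕ, ENNReal.ofReal (Real.exp (-((K+i:ℕ):ℝ)/2)) ≤
        (ENNReal.ofReal (Real.exp (-(1:ℝ)/2)))^i := by
      intro i
      rw [← ENNReal.ofReal_pow (Real.exp_pos _).le, ← Real.exp_nat_mul]
      apply ENNReal.ofReal_le_ofReal
      apply Real.exp_le_exp.2
      rw [hucast]
      have hc1 := Nat.cast_nonneg (α := ℝ) K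
      have hc2 := Nat.cast_nonneg (α := ℝ) i
      push_cast
      linarith
    have hr1 : ENNReal.ofReal (Real.exp (-(1:ℝ)/2)) < 1 := by
      rw [← ENNReal.ofReal_one]
      apply (ENNReal.ofReal_lt_ofReal_iff one_pos).2
      have : Real.exp (-(1:ℝ)/2) < Real.exp 0 := Real.exp_lt_exp.2 (by norm_num)
      simpa using this
    calc ∑' i : ℕ, ENNReal.ofReal (Real.exp (-((K+i:ℕ):ℝ)/2))
        ≤ ∑' i : ℕ, (ENNReal.ofReal (Real.exp (-(1:ℝ)/2)))^i := ENNReal.tsum_le_tsum hle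
      _ = (1 - ENNReal.ofReal (Real.exp (-(1:ℝ)/2)))⁻¹ := ENNReal.tsum_geometric _
      _ < ⊤ := by
          rw [ENNReal.inv_lt_top]
          exact tsub_pos_of_lt hr1
  have hBsum : B ≤ ENNReal.ofReal (2 * 2^q * 2^q * Real.exp (1+(m:ℝ)) *
      (1 + 2^q + (q:ℝ)^q + (4*(q:ℝ))^q)) *
      (S + ∑' i : ℕ, ENNReal.ofReal (Real.exp (-((K+i:ℕ):ℝ)/2))) := by
    rw [hB, hSdef]
    calc ∑' i : ℕ, ∫⁻ t in Ioc (u i) (u (i+1)), F₂ t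
        ≤ ∑' i : ℕ, ENNReal.ofReal (2 * 2^q * 2^q * Real.exp (1+(m:ℝ)) *
            (1 + 2^q + (q:ℝ)^q + (4*(q:ℝ))^q)) *
            (U (K+i) + ENNReal.ofReal (Real.exp (-((K+i:ℕ):ℝ)/2))) :=
          ENNReal.tsum_le_tsum hbound4
      _ = ENNReal.ofReal (2 * 2^q * 2^q * Real.exp (1+(m:ℝ)) *
            (1 + 2^q + (q:ℝ)^q + (4*(q:ℝ))^q)) *
          ∑' i : ℕ, (U (K+i) + ENNReal.ofReal (Real.exp (-((K+i:ℕ):ℝ)/2))) :=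
          ENNReal.tsum_mul_left
      _ = _ := by rw [ENNReal.tsum_add]
  have hABiff : A < ⊤ ↔ B < ⊤ := by
    have hUKfin : U K < ⊤ := ENNReal.ofReal_lt_top
    constructor
    · intro hAfin
      have hSfin : S < ⊤ := lt_of_le_of_lt hSA
        (ENNReal.add_lt_top.2 ⟨hUKfin, ENNReal.mul_lt_top ENNReal.ofReal_lt_top hAfin⟩)
      exact lt_of_le_of_lt hBsum
        (ENNReal.mul_lt_top ENNReal.ofReal_lt_top (ENNReal.add_lt_top.2 ⟨hSfin, hG⟩))
    · intro hBfin
      have hSfin : S < ⊤ := lt_of_le_of_lt hSB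
        (ENNReal.add_lt_top.2 ⟨hUKfin, ENNReal.mul_lt_top ENNReal.ofReal_lt_top hBfin⟩)
      exact lt_of_le_of_lt hAsum (ENNReal.mul_lt_top ENNReal.ofReal_lt_top hSfin)
  -- reduction of the left-hand side
  have hxv : x₀ ≤ v 0 := by
    rw [hvi 0, hx₀]
    apply Real.exp_le_exp.2
    calc t₀ - n * r t₀ ≤ (K:ℝ) := hK1
    _ ≤ ((K+0:ℕ):ℝ) := by norm_num
  have hsub1 : Ioi (v 0) ⊆ Ici x₀ := fun x hx => mem_Ici.2 (hxv.trans (le_of_lt hx))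
  have hnn1 : ∀ x ∈ Ioi (v 0), 0 ≤ (Real.log x)^q * ψ x := by
    intro x hx
    have hx1 : v 0 < x := hx
    have h1x : (1:ℝ) ≤ x := by
      calc (1:ℝ) ≤ Real.exp ((K:ℝ) + ((0:ℕ):ℝ)) := Real.one_le_exp (by positivity)
      _ = v 0 := by rw [hvdef]
      _ ≤ x := hx1.le
    exact mul_nonneg (pow_nonneg (Real.log_nonneg h1x) q) (hpos x (hsub1 hx)).le
  have hleft : IntegrableOn (fun x => (Real.log x)^q * ψ x) (Ici x₀) ↔ A < ⊤ := by
    constructor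
    · intro h
      have h2 : IntegrableOn (fun x => (Real.log x)^q * ψ x) (Ioi (v 0)) := h.mono_set hsub1
      have h3 := (hasFiniteIntegral_iff_ofReal
        ((ae_restrict_iff' measurableSet_Ioi).2 (ae_of_all _ hnn1))).1 h2.2
      rw [hAdef]
      simp only [hF₁def]
      exact h3
    · intro h
      have hIcc : IntegrableOn (fun x => (Real.log x)^q * ψ x) (Icc x₀ (v 0)) :=
        (hf₁cont.mono Icc_subset_Ici_self).integrableOn_Icc
      have hIoi : IntegrableOn (fun x => (Real.log x)^q * ψ x) (Ioi (v 0)) := by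
        refine ⟨(hf₁cont.mono hsub1).aestronglyMeasurable measurableSet_Ioi, ?_⟩
        rw [hasFiniteIntegral_iff_ofReal ((ae_restrict_iff' measurableSet_Ioi).2 (ae_of_all _ hnn1))]
        rw [hAdef] at h
        simp only [hF₁def] at h
        exact h
      have hun := hIcc.union hIoi
      rwa [Icc_union_Ioi_eq_Ici hxv] at hun
  -- reduction of the right-hand side
  have htv : t₀ ≤ u 0 := by rw [huval 0]; exact htt₀ _
  have hsub2 : Ioi (u 0) ⊆ Ici t₀ := fun t ht => mem_Ici.2 (htv.trans (le_of_lt ht))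
  have hnn2 : ∀ t ∈ Ioi (u 0), 0 ≤ t^q * Real.exp (-((m:ℝ)+n) * r t) := by
    intro t ht
    have h1t : (1:ℝ) ≤ t := by
      have := h1tt (K+0) (Nat.le_add_right K 0)
      rw [huval 0] at ht
      have ht' : tt (K+0) < t := ht
      linarith
    exact mul_nonneg (pow_nonneg (by linarith) q) (Real.exp_pos _).le
  have hright : IntegrableOn (fun t => t^q * Real.exp (-((m:ℝ)+n) * r t)) (Ici t₀) ↔ B < ⊤ := by
    constructor
    · intro h
      have h2 : IntegrableOn (fun t => t^q * Real.exp (-((m:ℝ)+n) * r t)) (Ioi (u 0)) :=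
        h.mono_set hsub2
      have h3 := (hasFiniteIntegral_iff_ofReal
        ((ae_restrict_iff' measurableSet_Ioi).2 (ae_of_all _ hnn2))).1 h2.2
      rw [hBdef]
      simp only [hF₂def]
      exact h3
    · intro h
      have hIcc : IntegrableOn (fun t => t^q * Real.exp (-((m:ℝ)+n) * r t)) (Icc t₀ (u 0)) :=
        (hf₂cont.mono Icc_subset_Ici_self).integrableOn_Icc
      have hIoi : IntegrableOn (fun t => t^q * Real.exp (-((m:ℝ)+n) * r t)) (Ioi (u 0)) := by
        refine ⟨(hf₂cont.mono hsub2).aestronglyMeasurable measurableSet_Ioi, ?_⟩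
        rw [hasFiniteIntegral_iff_ofReal ((ae_restrict_iff' measurableSet_Ioi).2 (ae_of_all _ hnn2))]
        rw [hBdef] at h
        simp only [hF₂def] at h
        exact h
      have hun := hIcc.union hIoi
      rwa [Icc_union_Ioi_eq_Ici htv] at hun
  exact hleft.trans (hABiff.trans hright.symm)
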